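/- Let f : ℝ → ℝ be continuously differentiable with bounded derivative, with Lipschitz/derivative bound ‖f'‖_∞, and let a, b ≥ 0. Define g : ℝ → ℝ by g(x) = ∫_ℝ f(x + b z) p(z) dz. Then the variance of g under the centered Gaussian measure of variance a² on ℝ satisfies Var(g) = ∫_ℝ g(a u)² p(u) du − ( ∫_ℝ g(a u) p(u) du )² ≤ ‖f'‖_∞² · a². (Variance bound for the conditional expectation of a Lipschitz function of a Gaussian variable given a Gaussian component.) -/

import Mathlib

open MeasureTheory Real Set

/-- Standard normal density `p(z) = (2π)^{-1/2} e^{-z²/2}`. -/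
noncomputable def stdPdf (z : ℝ) : ℝ :=
  (Real.sqrt (2 * Real.pi))⁻¹ * Real.exp (-z ^ 2 / 2)

lemma stdPdf_nonneg (z : ℝ) : 0 ≤ stdPdf z := by
  unfold stdPdf; positivity

lemma continuous_stdPdf : Continuous stdPdf := by
  unfold stdPdf; fun_prop

lemma integrable_pow_mul_expStd (n : ℕ) :
    Integrable (fun z : ℝ => z ^ n * Real.exp (-z ^ 2 / 2)) := by
  have h := integrable_rpow_mul_exp_neg_mul_sq (b := (1:ℝ)/2) (by norm_num)
      (s := (n : ℝ)) (by exact_mod_cast neg_one_lt_zero.trans_le (Nat.cast_nonneg n))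
  have he : (fun z : ℝ => z ^ n * Real.exp (-z ^ 2 / 2))
      = fun z : ℝ => z ^ (n : ℝ) * Real.exp (-(1/2) * z ^ 2) := by
    ext z
    rw [Real.rpow_natCast, show -z ^ 2 / 2 = -(1/2) * z ^ 2 by ring]
  rw [he]; exact h

lemma integrable_expStd : Integrable (fun z : ℝ => Real.exp (-z ^ 2 / 2)) := by
  simpa using integrable_pow_mul_expStd 0

lemma integral_expStd : ∫ z : ℝ, Real.exp (-z ^ 2 / 2) = Real.sqrt (2 * Real.pi) := by
  have h := integral_gaussian (1/2)
  rw [show Real.pi / (1/2) = 2 * Real.pi by ring] at h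
  rw [← h]
  congr 1 with z
  congr 1
  ring

lemma integrable_stdPdf : Integrable stdPdf := by
  unfold stdPdf; exact integrable_expStd.const_mul _

lemma sqrt_two_pi_pos : 0 < Real.sqrt (2 * Real.pi) :=
  Real.sqrt_pos.mpr (by positivity)

lemma integral_stdPdf : ∫ z : ℝ, stdPdf z = 1 := by
  unfold stdPdf
  rw [integral_const_mul, integral_expStd, inv_mul_cancel₀ sqrt_two_pi_pos.ne']

lemma integrable_pow_mul_stdPdf (n : ℕ) :
    Integrable (fun z : ℝ => z ^ n * stdPdf z) := by
  unfold stdPdf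
  have : (fun z : ℝ => z ^ n * ((Real.sqrt (2 * Real.pi))⁻¹ * Real.exp (-z ^ 2 / 2)))
      = fun z : ℝ => (Real.sqrt (2 * Real.pi))⁻¹ * (z ^ n * Real.exp (-z ^ 2 / 2)) := by
    ext z; ring
  rw [this]
  exact (integrable_pow_mul_expStd n).const_mul _

lemma integrable_abs_mul_stdPdf : Integrable (fun z : ℝ => |z| * stdPdf z) := by
  have h := (integrable_pow_mul_stdPdf 1).abs
  refine h.congr ?_
  filter_upwards with z
  rw [pow_one, abs_mul, abs_of_nonneg (stdPdf_nonneg z)]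

lemma integral_sq_mul_expStd :
    ∫ z : ℝ, z ^ 2 * Real.exp (-z ^ 2 / 2) = Real.sqrt (2 * Real.pi) := by
  have hd : ∀ z : ℝ, HasDerivAt (fun z : ℝ => -z * Real.exp (-z ^ 2 / 2))
      ((z ^ 2 - 1) * Real.exp (-z ^ 2 / 2)) z := by
    intro z
    have h1 : HasDerivAt (fun z : ℝ => -z ^ 2 / 2) (-z) z := by
      have := ((hasDerivAt_pow 2 z).neg.div_const 2)
      refine this.congr_deriv ?_
      simp; ring
    have h2 := h1.exp
    have h3 := ((hasDerivAt_id z).neg.mul h2)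
    refine h3.congr_deriv ?_
    simp only [Pi.neg_apply, id]
    ring
  have hint : Integrable (fun z : ℝ => (z ^ 2 - 1) * Real.exp (-z ^ 2 / 2)) := by
    have := (integrable_pow_mul_expStd 2).sub
      (by simpa using integrable_pow_mul_expStd 0)
    refine this.congr ?_
    filter_upwards with z
    simp only [Pi.sub_apply]
    ring
  have hF : Integrable (fun z : ℝ => -z * Real.exp (-z ^ 2 / 2)) := by
    have := (integrable_pow_mul_expStd 1).neg
    refine this.congr ?_
    filter_upwards with z
    simp only [Pi.neg_apply]
    ring
  have h0 := integral_eq_zero_of_hasDerivAt_of_integrable hd hint hF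
  have hsub : ∫ z : ℝ, (z ^ 2 - 1) * Real.exp (-z ^ 2 / 2)
      = (∫ z : ℝ, z ^ 2 * Real.exp (-z ^ 2 / 2)) - ∫ z : ℝ, Real.exp (-z ^ 2 / 2) := by
    rw [← integral_sub (integrable_pow_mul_expStd 2) integrable_expStd]
    congr 1 with z; ring
  rw [hsub] at h0
  rw [integral_expStd] at h0
  linarith

lemma integral_sq_mul_stdPdf : ∫ z : ℝ, z ^ 2 * stdPdf z = 1 := by
  unfold stdPdf
  have : (fun z : ℝ => z ^ 2 * ((Real.sqrt (2 * Real.pi))⁻¹ * Real.exp (-z ^ 2 / 2)))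
      = fun z : ℝ => (Real.sqrt (2 * Real.pi))⁻¹ * (z ^ 2 * Real.exp (-z ^ 2 / 2)) := by
    ext z; ring
  rw [this, integral_const_mul, integral_sq_mul_expStd,
    inv_mul_cancel₀ sqrt_two_pi_pos.ne']

/-- `g(x) = ∫_ℝ f(x + b z) p(z) dz`: the Gaussian smoothing of `f` at scale `b`. -/
noncomputable def gaussSmooth (f : ℝ → ℝ) (b : ℝ) (x : ℝ) : ℝ :=
  ∫ z : ℝ, f (x + b * z) * stdPdf z

/-- Variance bound for the conditional expectation of a Lipschitz function of a
Gaussian variable given a Gaussian component: if `f` is `C¹` with `|f'| ≤ M`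
and `a, b ≥ 0`, then the variance of `g(x) = ∫ f(x + bz) p(z) dz` under the
centered Gaussian measure of variance `a²` satisfies
`∫ g(au)² p(u) du − (∫ g(au) p(u) du)² ≤ M² a²`. -/
theorem gaussSmooth_variance_bound (f : ℝ → ℝ) (hf : ContDiff ℝ 1 f)
    (M : ℝ) (hM : ∀ x : ℝ, |deriv f x| ≤ M)
    (a b : ℝ) (ha : 0 ≤ a) (hb : 0 ≤ b) :
    (∫ u : ℝ, (gaussSmooth f b (a * u)) ^ 2 * stdPdf u)
        - (∫ u : ℝ, gaussSmooth f b (a * u) * stdPdf u) ^ 2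
      ≤ M ^ 2 * a ^ 2 := by
  have hM0 : 0 ≤ M := (abs_nonneg _).trans (hM 0)
  -- f is Lipschitz with constant M
  have hflip : ∀ x y : ℝ, |f x - f y| ≤ M * |x - y| := by
    have hL : LipschitzWith M.toNNReal f := by
      apply lipschitzWith_of_nnnorm_deriv_le (hf.differentiable one_ne_zero)
      intro x
      rw [← NNReal.coe_le_coe, coe_nnnorm, Real.norm_eq_abs, Real.coe_toNNReal M hM0]
      exact hM x
    intro x y
    have := hL.dist_le_mul x y
    rwa [Real.dist_eq, Real.dist_eq, Real.coe_toNNReal M hM0] at this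
  -- integrability of the smoothing integrand
  have hint : ∀ x : ℝ, Integrable (fun z : ℝ => f (x + b * z) * stdPdf z) := by
    intro x
    have hbnd : Integrable (fun z : ℝ => (|f x| + M * b * |z|) * stdPdf z) := by
      have : (fun z : ℝ => (|f x| + M * b * |z|) * stdPdf z)
          = fun z : ℝ => |f x| * stdPdf z + (M * b) * (|z| * stdPdf z) := by
        ext z; ring
      rw [this]
      exact (integrable_stdPdf.const_mul _).add (integrable_abs_mul_stdPdf.const_mul _)
    refine hbnd.mono' ?_ ?_
    · exact ((hf.continuous.comp (by continuity)).mul continuous_stdPdf).aestronglyMeasurable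
    · filter_upwards with z
      rw [Real.norm_eq_abs, abs_mul, abs_of_nonneg (stdPdf_nonneg z)]
      refine mul_le_mul_of_nonneg_right ?_ (stdPdf_nonneg z)
      calc |f (x + b * z)| = |f x + (f (x + b * z) - f x)| := by congr 1; ring
        _ ≤ |f x| + |f (x + b * z) - f x| := abs_add_le _ _
        _ ≤ |f x| + M * b * |z| := by
            have h1 := hflip (x + b * z) x
            have h2 : |x + b * z - x| = b * |z| := by
              rw [show x + b * z - x = b * z by ring, abs_mul, abs_of_nonneg hb]
            rw [h2] at h1
            linarith [h1]
  -- g is Lipschitz with constant M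
  have hg : ∀ x y : ℝ, |gaussSmooth f b x - gaussSmooth f b y| ≤ M * |x - y| := by
    intro x y
    unfold gaussSmooth
    rw [← integral_sub (hint x) (hint y)]
    have heq : (fun z : ℝ => f (x + b * z) * stdPdf z - f (y + b * z) * stdPdf z)
        = fun z : ℝ => (f (x + b * z) - f (y + b * z)) * stdPdf z := by
      ext z; ring
    rw [heq]
    have hb2 : Integrable (fun z : ℝ => (M * |x - y|) * stdPdf z) :=
      integrable_stdPdf.const_mul _
    calc |∫ z : ℝ, (f (x + b * z) - f (y + b * z)) * stdPdf z|
        ≤ ∫ z : ℝ, (M * |x - y|) * stdPdf z := by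
          rw [← Real.norm_eq_abs]
          refine norm_integral_le_of_norm_le hb2 ?_
          filter_upwards with z
          rw [Real.norm_eq_abs, abs_mul, abs_of_nonneg (stdPdf_nonneg z)]
          refine mul_le_mul_of_nonneg_right ?_ (stdPdf_nonneg z)
          have := hflip (x + b * z) (y + b * z)
          simpa [show x + b * z - (y + b * z) = x - y by ring] using this
      _ = M * |x - y| := by rw [integral_const_mul, integral_stdPdf, mul_one]
  -- the function h u = g (a u)
  set h : ℝ → ℝ := fun u => gaussSmooth f b (a * u) with hh_def
  have hh : ∀ u v : ℝ, |h u - h v| ≤ (M * a) * |u - v| := by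
    intro u v
    have := hg (a * u) (a * v)
    calc |h u - h v| ≤ M * |a * u - a * v| := this
      _ = (M * a) * |u - v| := by
          rw [show a * u - a * v = a * (u - v) by ring, abs_mul, abs_of_nonneg ha]
          ring
  have hcont : Continuous h := by
    have hL : LipschitzWith (M * a).toNNReal h := by
      apply LipschitzWith.of_dist_le_mul
      intro u v
      rw [Real.dist_eq, Real.dist_eq, Real.coe_toNNReal _ (by positivity)]
      exact hh u v
    exact hL.continuous
  set c : ℝ := h 0 with hc_def
  have hhc : ∀ u : ℝ, |h u - c| ≤ (M * a) * |u| := by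
    intro u
    simpa using hh u 0
  have habs : ∀ u : ℝ, |h u| ≤ |c| + (M * a) * |u| := by
    intro u
    calc |h u| ≤ |c| + |h u - c| := by
          rw [add_comm]; simpa using abs_add_le (h u - c) c
      _ ≤ |c| + (M * a) * |u| := by linarith [hhc u]
  -- integrability of h * p
  have ihp : Integrable (fun u : ℝ => h u * stdPdf u) := by
    have hbnd : Integrable (fun u : ℝ => (|c| + (M * a) * |u|) * stdPdf u) := by
      have : (fun u : ℝ => (|c| + (M * a) * |u|) * stdPdf u)
          = fun u : ℝ => |c| * stdPdf u + (M * a) * (|u| * stdPdf u) := by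
        ext u; ring
      rw [this]
      exact (integrable_stdPdf.const_mul _).add (integrable_abs_mul_stdPdf.const_mul _)
    refine hbnd.mono' ((hcont.mul continuous_stdPdf).aestronglyMeasurable) ?_
    filter_upwards with u
    rw [Real.norm_eq_abs, abs_mul, abs_of_nonneg (stdPdf_nonneg u)]
    exact mul_le_mul_of_nonneg_right (habs u) (stdPdf_nonneg u)
  -- integrability of h² * p
  have ih2p : Integrable (fun u : ℝ => (h u) ^ 2 * stdPdf u) := by
    have hbnd : Integrable (fun u : ℝ => (|c| + (M * a) * |u|) ^ 2 * stdPdf u) := by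
      have : (fun u : ℝ => (|c| + (M * a) * |u|) ^ 2 * stdPdf u)
          = fun u : ℝ => c ^ 2 * stdPdf u + (2 * |c| * (M * a)) * (|u| * stdPdf u)
            + (M * a) ^ 2 * (u ^ 2 * stdPdf u) := by
        ext u
        rw [add_sq, mul_pow, sq_abs, sq_abs]
        ring
      rw [this]
      exact ((integrable_stdPdf.const_mul _).add
        (integrable_abs_mul_stdPdf.const_mul _)).add
        ((integrable_pow_mul_stdPdf 2).const_mul _)
    refine hbnd.mono' (((hcont.pow 2).mul continuous_stdPdf).aestronglyMeasurable) ?_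
    filter_upwards with u
    rw [Real.norm_eq_abs, abs_mul, abs_of_nonneg (stdPdf_nonneg u)]
    refine mul_le_mul_of_nonneg_right ?_ (stdPdf_nonneg u)
    rw [abs_of_nonneg (sq_nonneg (h u)), ← sq_abs (h u)]
    exact pow_le_pow_left₀ (abs_nonneg _) (habs u) 2
  -- integrability of (h - c)² * p
  have ihc2p : Integrable (fun u : ℝ => (h u - c) ^ 2 * stdPdf u) := by
    have hbnd : Integrable (fun u : ℝ => (M * a) ^ 2 * (u ^ 2 * stdPdf u)) :=
      (integrable_pow_mul_stdPdf 2).const_mul _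
    refine hbnd.mono'
      ((((hcont.sub continuous_const).pow 2).mul continuous_stdPdf).aestronglyMeasurable) ?_
    filter_upwards with u
    rw [Real.norm_eq_abs, abs_mul, abs_of_nonneg (stdPdf_nonneg u), ← mul_assoc]
    refine mul_le_mul_of_nonneg_right ?_ (stdPdf_nonneg u)
    calc |(h u - c) ^ 2| = |h u - c| ^ 2 := by
          rw [abs_of_nonneg (sq_nonneg _), sq_abs]
      _ ≤ ((M * a) * |u|) ^ 2 := pow_le_pow_left₀ (abs_nonneg _) (hhc u) 2
      _ = (M * a) ^ 2 * u ^ 2 := by rw [mul_pow, sq_abs]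
  -- expand the centered second moment
  have key : ∫ u : ℝ, (h u - c) ^ 2 * stdPdf u
      = (∫ u : ℝ, (h u) ^ 2 * stdPdf u) - 2 * c * (∫ u : ℝ, h u * stdPdf u) + c ^ 2 := by
    have heq : (fun u : ℝ => (h u - c) ^ 2 * stdPdf u)
        = fun u : ℝ => ((h u) ^ 2 * stdPdf u - (2 * c) * (h u * stdPdf u))
          + c ^ 2 * stdPdf u := by
      ext u; ring
    have iB : Integrable (fun u : ℝ => 2 * c * (h u * stdPdf u)) := ihp.const_mul (2 * c)
    have iA : Integrable (fun u : ℝ => h u ^ 2 * stdPdf u - 2 * c * (h u * stdPdf u)) :=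
      ih2p.sub iB
    have iC : Integrable (fun u : ℝ => c ^ 2 * stdPdf u) := integrable_stdPdf.const_mul _
    rw [heq, integral_add iA iC, integral_sub ih2p iB, integral_const_mul, integral_const_mul,
      integral_stdPdf, mul_one]
  -- bound the centered second moment
  have hle : ∫ u : ℝ, (h u - c) ^ 2 * stdPdf u ≤ (M * a) ^ 2 := by
    have hb2 : Integrable (fun u : ℝ => (M * a) ^ 2 * (u ^ 2 * stdPdf u)) :=
      (integrable_pow_mul_stdPdf 2).const_mul _
    have hmono : ∀ u : ℝ, (h u - c) ^ 2 * stdPdf u ≤ (M * a) ^ 2 * (u ^ 2 * stdPdf u) := by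
      intro u
      rw [← mul_assoc]
      refine mul_le_mul_of_nonneg_right ?_ (stdPdf_nonneg u)
      calc (h u - c) ^ 2 = |h u - c| ^ 2 := (sq_abs _).symm
        _ ≤ ((M * a) * |u|) ^ 2 := pow_le_pow_left₀ (abs_nonneg _) (hhc u) 2
        _ = (M * a) ^ 2 * u ^ 2 := by rw [mul_pow, sq_abs]
    calc ∫ u : ℝ, (h u - c) ^ 2 * stdPdf u
        ≤ ∫ u : ℝ, (M * a) ^ 2 * (u ^ 2 * stdPdf u) := integral_mono ihc2p hb2 hmono
      _ = (M * a) ^ 2 := by rw [integral_const_mul, integral_sq_mul_stdPdf, mul_one]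
  -- conclude
  show (∫ u : ℝ, (h u) ^ 2 * stdPdf u) - (∫ u : ℝ, h u * stdPdf u) ^ 2 ≤ M ^ 2 * a ^ 2
  have h1 : (∫ u : ℝ, (h u) ^ 2 * stdPdf u) - (∫ u : ℝ, h u * stdPdf u) ^ 2
      = (∫ u : ℝ, (h u - c) ^ 2 * stdPdf u) - ((∫ u : ℝ, h u * stdPdf u) - c) ^ 2 := by
    rw [key]; ring
  rw [h1]
  have h2 := sq_nonneg ((∫ u : ℝ, h u * stdPdf u) - c)
  nlinarith [hle]
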